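/- Let k > 0 and β ≥ −β_c(k). Then the only stationary beam solution with parameters β, k is the identically zero function (the straight equilibrium position). -/

import Mathlib

set_option maxHeartbeats 1000000

open Real

/-- `μ_n(k) = k/(n²π²) + n²π²`. -/
noncomputable def mu (n : ℕ) (k : ℝ) : ℝ := k / ((n : ℝ)^2 * π^2) + (n : ℝ)^2 * π^2

/-- A stationary beam solution with parameters `β ∈ ℝ`, `k > 0`: a four-times continuously
differentiable function satisfying the beam equation on `[0,1]`
together with the hinged boundary conditions `u(0) = u(1) = u''(0) = u''(1) = 0`. -/
def IsStationarySolution (β k : ℝ) (u : ℝ → ℝ) : Prop :=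
  ContDiff ℝ 4 u ∧
  (∀ x ∈ Set.Icc (0 : ℝ) 1,
    iteratedDeriv 4 u x
      - (β + ∫ y in (0 : ℝ)..1, (deriv u y)^2) * iteratedDeriv 2 u x + k * u x = 0) ∧
  u 0 = 0 ∧ u 1 = 0 ∧ iteratedDeriv 2 u 0 = 0 ∧ iteratedDeriv 2 u 1 = 0

/-- The critical buckling load `β_c(k) = min_{n ≥ 1} μ_n(k)`. -/
noncomputable def betaC (k : ℝ) : ℝ := sInf {x : ℝ | ∃ n : ℕ, 1 ≤ n ∧ x = mu n k}

namespace OnlyStraightAux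

open MeasureTheory intervalIntegral Set

lemma hasDerivAt_sin_mul (ω x : ℝ) :
    HasDerivAt (fun y => Real.sin (ω * y)) (ω * Real.cos (ω * x)) x := by
  have h : HasDerivAt (fun y : ℝ => ω * y) ω x := by
    simpa using (hasDerivAt_id x).const_mul ω
  simpa [mul_comm, Function.comp_def] using (Real.hasDerivAt_sin (ω * x)).comp x h

lemma hasDerivAt_cos_mul (ω x : ℝ) :
    HasDerivAt (fun y => Real.cos (ω * y)) (-(ω * Real.sin (ω * x))) x := by
  have h : HasDerivAt (fun y : ℝ => ω * y) ω x := by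
    simpa using (hasDerivAt_id x).const_mul ω
  simpa [mul_comm, Function.comp_def] using (Real.hasDerivAt_cos (ω * x)).comp x h

/-- Integration by parts twice against `sin (nπ x)`. -/
lemma parts (f : ℝ → ℝ) (hf : ContDiff ℝ 2 f) (h0 : f 0 = 0) (h1 : f 1 = 0) (n : ℕ) :
    ∫ x in (0:ℝ)..1, deriv (deriv f) x * Real.sin ((n:ℝ) * π * x)
      = -((((n:ℝ) * π)^2)) * ∫ x in (0:ℝ)..1, f x * Real.sin ((n:ℝ) * π * x) := by
  set ω : ℝ := (n:ℝ) * π with hω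
  have hd1 : Differentiable ℝ f := hf.differentiable (by norm_num)
  have hf1 : ContDiff ℝ 1 (deriv f) := by
    have h2 : ContDiff ℝ ((1 + 1 : ℕ) : WithTop ℕ∞) f := by exact_mod_cast hf
    simpa using ContDiff.iterate_deriv' 1 1 h2
  have hd2 : Differentiable ℝ (deriv f) := hf1.differentiable one_ne_zero
  have hc1 : Continuous (deriv f) := hf1.continuous
  have hc2 : Continuous (deriv (deriv f)) := hf1.continuous_deriv le_rfl
  have hsin1 : Real.sin ω = 0 := by
    simpa [hω] using Real.sin_nat_mul_pi n
  have step1 : ∫ x in (0:ℝ)..1, Real.sin (ω * x) * deriv (deriv f) x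
      = - ∫ x in (0:ℝ)..1, (ω * Real.cos (ω * x)) * deriv f x := by
    have := integral_mul_deriv_eq_deriv_mul
      (fun x _ => hasDerivAt_sin_mul ω x)
      (fun x _ => (hd2 x).hasDerivAt)
      (Continuous.intervalIntegrable (by continuity) 0 1)
      (hc2.intervalIntegrable 0 1)
    simpa [hsin1] using this
  have step2 : ∫ x in (0:ℝ)..1, Real.cos (ω * x) * deriv f x
      = ω * ∫ x in (0:ℝ)..1, Real.sin (ω * x) * f x := by
    have h := integral_mul_deriv_eq_deriv_mul
      (fun x _ => hasDerivAt_cos_mul ω x)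
      (fun x _ => (hd1 x).hasDerivAt)
      (Continuous.intervalIntegrable (by continuity) 0 1)
      (hc1.intervalIntegrable 0 1)
    rw [h, h0, h1]
    have h2 : (fun x => -(ω * Real.sin (ω * x)) * f x)
        = (fun x => -(ω * (Real.sin (ω * x) * f x))) := by funext x; ring
    rw [h2, intervalIntegral.integral_neg, intervalIntegral.integral_const_mul]
    ring
  have comm1 : ∫ x in (0:ℝ)..1, deriv (deriv f) x * Real.sin (ω * x)
      = ∫ x in (0:ℝ)..1, Real.sin (ω * x) * deriv (deriv f) x :=
    intervalIntegral.integral_congr (fun x _ => mul_comm _ _)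
  have comm2 : ∫ x in (0:ℝ)..1, Real.sin (ω * x) * f x
      = ∫ x in (0:ℝ)..1, f x * Real.sin (ω * x) :=
    intervalIntegral.integral_congr (fun x _ => mul_comm _ _)
  have pull : ∫ x in (0:ℝ)..1, (ω * Real.cos (ω * x)) * deriv f x
      = ω * ∫ x in (0:ℝ)..1, Real.cos (ω * x) * deriv f x := by
    have h2 : (fun x => (ω * Real.cos (ω * x)) * deriv f x)
        = (fun x => ω * (Real.cos (ω * x) * deriv f x)) := by funext x; ring
    rw [h2, intervalIntegral.integral_const_mul]
  calc ∫ x in (0:ℝ)..1, deriv (deriv f) x * Real.sin (ω * x)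
      = - (ω * (ω * ∫ x in (0:ℝ)..1, Real.sin (ω * x) * f x)) := by
        rw [comm1, step1, pull, step2]
    _ = -(ω^2) * ∫ x in (0:ℝ)..1, f x * Real.sin (ω * x) := by rw [comm2]; ring

lemma exp_diff (n : ℤ) (x : ℝ) :
    Complex.exp (2*(π:ℂ)*Complex.I*(-(n:ℂ))*(x:ℝ)/2)
      - Complex.exp (2*(π:ℂ)*Complex.I*(-(n:ℂ))*(((2 - x : ℝ)):ℂ)/2)
      = -(2*Complex.I) * ((Real.sin ((n:ℝ)*π*x) : ℝ) : ℂ) := by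
  have e1 : Complex.exp (2*(π:ℂ)*Complex.I*(-(n:ℂ))*(x:ℝ)/2)
      = Complex.exp ((-((((n:ℝ)*π*x : ℝ)):ℂ)) * Complex.I) := by
    congr 1; push_cast; ring
  have e2 : Complex.exp (2*(π:ℂ)*Complex.I*(-(n:ℂ))*(((2 - x : ℝ)):ℂ)/2)
      = Complex.exp (((-n : ℤ):ℂ)*(2*(π:ℂ)*Complex.I))
        * Complex.exp (((((n:ℝ)*π*x : ℝ)):ℂ) * Complex.I) := by
    rw [← Complex.exp_add]; congr 1; push_cast; ring
  rw [e1, e2, Complex.exp_int_mul_two_pi_mul_I, one_mul,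
    Complex.exp_mul_I, Complex.exp_mul_I, Complex.cos_neg, Complex.sin_neg, Complex.ofReal_sin]
  ring

/-- Completeness of the sine system on `[0,1]`. -/
lemma sine_complete (u : ℝ → ℝ) (hc : Continuous u) (h0 : u 0 = 0) (h1 : u 1 = 0)
    (h : ∀ n : ℕ, ∫ x in (0:ℝ)..1, u x * Real.sin ((n:ℝ) * π * x) = 0) :
    ∀ x ∈ Icc (0:ℝ) 1, u x = 0 := by
  haveI : Fact ((0:ℝ) < 2) := ⟨by norm_num⟩
  have hint : ∀ m : ℤ, ∫ x in (0:ℝ)..1, u x * Real.sin ((m:ℝ) * π * x) = 0 := by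
    intro m
    rcases le_or_gt 0 m with hm | hm
    · lift m to ℕ using hm
      exact_mod_cast h m
    · have hm' : 0 ≤ -m := by omega
      have h2 := h (-m).toNat
      have hcast : (((-m).toNat : ℝ)) = -(m:ℝ) := by
        have : ((-m).toNat : ℤ) = -m := Int.toNat_of_nonneg hm'
        exact_mod_cast congrArg (Int.cast : ℤ → ℝ) this
      rw [hcast] at h2
      have h3 : ∫ x in (0:ℝ)..1, -(u x * Real.sin ((m:ℝ) * π * x)) = 0 := by
        conv_rhs => rw [← h2]
        apply intervalIntegral.integral_congr
        intro x _
        show -(u x * Real.sin ((m:ℝ) * π * x)) = u x * Real.sin (-(m:ℝ) * π * x)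
        rw [show (-(m:ℝ)) * π * x = -((m:ℝ) * π * x) by ring, Real.sin_neg]
        ring
      rw [intervalIntegral.integral_neg, neg_eq_zero] at h3
      exact h3
  set g : ℝ → ℂ := fun x => if x ≤ 1 then (u x : ℂ) else -(u (2 - x) : ℂ) with hg
  have hgc : Continuous g := by
    apply Continuous.if_le
    · exact Complex.continuous_ofReal.comp hc
    · exact (Complex.continuous_ofReal.comp (hc.comp (continuous_const.sub continuous_id))).neg
    · exact continuous_id
    · exact continuous_const
    · intro x hx
      have hx1 : x = 1 := hx
      subst hx1
      norm_num [h1]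
  have hg02 : g 0 = g 2 := by norm_num [hg, h0]
  have hcu : Continuous (fun x : ℝ => ((u x : ℝ) : ℂ)) := Complex.continuous_ofReal.comp hc
  have key : ∀ i : ℤ, fourierCoeff (AddCircle.liftIco 2 0 g) i = 0 := by
    intro i
    have hEc : Continuous (fun x : ℝ => Complex.exp (2*(π:ℂ)*Complex.I*(-(i:ℂ))*(x:ℝ)/2)) := by
      apply Complex.continuous_exp.comp
      continuity
    have hE2c : Continuous
        (fun x : ℝ => Complex.exp (2*(π:ℂ)*Complex.I*(-(i:ℂ))*(((2 - x : ℝ)):ℂ)/2)) := by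
      apply Complex.continuous_exp.comp
      continuity
    have hgint : ∀ p q : ℝ, IntervalIntegrable
        (fun x => Complex.exp (2*(π:ℂ)*Complex.I*(-(i:ℂ))*(x:ℝ)/2) * g x) volume p q :=
      fun p q => (hEc.mul hgc).intervalIntegrable p q
    have hmain : ∫ x in (0:ℝ)..2, Complex.exp (2*(π:ℂ)*Complex.I*(-(i:ℂ))*(x:ℝ)/2) * g x = 0 := by
      rw [← intervalIntegral.integral_add_adjacent_intervals (b := (1:ℝ)) (hgint 0 1) (hgint 1 2)]
      have part1 : ∫ x in (0:ℝ)..1, Complex.exp (2*(π:ℂ)*Complex.I*(-(i:ℂ))*(x:ℝ)/2) * g x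
          = ∫ x in (0:ℝ)..1, Complex.exp (2*(π:ℂ)*Complex.I*(-(i:ℂ))*(x:ℝ)/2) * (u x : ℂ) := by
        apply intervalIntegral.integral_congr
        intro x hx
        rw [Set.uIcc_of_le (by norm_num : (0:ℝ) ≤ 1)] at hx
        simp [hg, hx.2]
      have part2 : ∫ x in (1:ℝ)..2, Complex.exp (2*(π:ℂ)*Complex.I*(-(i:ℂ))*(x:ℝ)/2) * g x
          = ∫ x in (0:ℝ)..1,
              Complex.exp (2*(π:ℂ)*Complex.I*(-(i:ℂ))*(((2 - x : ℝ)):ℂ)/2) * (-(u x : ℂ)) := by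
        have e1 : ∫ x in (1:ℝ)..2, Complex.exp (2*(π:ℂ)*Complex.I*(-(i:ℂ))*(x:ℝ)/2) * g x
            = ∫ x in (1:ℝ)..2,
                (fun y : ℝ => Complex.exp (2*(π:ℂ)*Complex.I*(-(i:ℂ))*(((2 - y : ℝ)):ℂ)/2)
                  * (-(u y : ℂ))) (2 - x) := by
          apply intervalIntegral.integral_congr
          intro x hx
          rw [Set.uIcc_of_le (by norm_num : (1:ℝ) ≤ 2)] at hx
          simp only
          rw [show (2:ℝ) - (2 - x) = x by ring]
          rcases eq_or_lt_of_le hx.1 with h1x | h1x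
          · rw [← h1x]
            norm_num [hg, h1]
          · have hxle : ¬ (x ≤ 1) := not_le.mpr h1x
            simp [hg, hxle]
        rw [e1, intervalIntegral.integral_comp_sub_left
          (fun y : ℝ => Complex.exp (2*(π:ℂ)*Complex.I*(-(i:ℂ))*(((2 - y : ℝ)):ℂ)/2)
            * (-(u y : ℂ))) 2]
        norm_num
      rw [part1, part2]
      have hcomb : ∀ x : ℝ,
          Complex.exp (2*(π:ℂ)*Complex.I*(-(i:ℂ))*(x:ℝ)/2) * (u x : ℂ)
            + Complex.exp (2*(π:ℂ)*Complex.I*(-(i:ℂ))*(((2 - x : ℝ)):ℂ)/2) * (-(u x : ℂ))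
          = -(2*Complex.I) * (((Real.sin ((i:ℝ)*π*x) * u x : ℝ)) : ℂ) := by
        intro x
        have hd := exp_diff i x
        calc Complex.exp (2*(π:ℂ)*Complex.I*(-(i:ℂ))*(x:ℝ)/2) * (u x : ℂ)
            + Complex.exp (2*(π:ℂ)*Complex.I*(-(i:ℂ))*(((2 - x : ℝ)):ℂ)/2) * (-(u x : ℂ))
            = (Complex.exp (2*(π:ℂ)*Complex.I*(-(i:ℂ))*(x:ℝ)/2)
              - Complex.exp (2*(π:ℂ)*Complex.I*(-(i:ℂ))*(((2 - x : ℝ)):ℂ)/2)) * (u x : ℂ) := by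
              ring
          _ = (-(2*Complex.I) * ((Real.sin ((i:ℝ)*π*x) : ℝ) : ℂ)) * (u x : ℂ) := by rw [hd]
          _ = -(2*Complex.I) * (((Real.sin ((i:ℝ)*π*x) * u x : ℝ)) : ℂ) := by
              push_cast; ring
      have hi1 : IntervalIntegrable
          (fun x : ℝ => Complex.exp (2*(π:ℂ)*Complex.I*(-(i:ℂ))*(x:ℝ)/2) * (u x : ℂ))
          volume 0 1 := (hEc.mul hcu).intervalIntegrable _ _
      have hi2 : IntervalIntegrable
          (fun x : ℝ => Complex.exp (2*(π:ℂ)*Complex.I*(-(i:ℂ))*(((2 - x : ℝ)):ℂ)/2)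
            * (-(u x : ℂ))) volume 0 1 := (hE2c.mul hcu.neg).intervalIntegrable _ _
      rw [← intervalIntegral.integral_add hi1 hi2]
      have hcongr : ∫ x in (0:ℝ)..1,
          (Complex.exp (2*(π:ℂ)*Complex.I*(-(i:ℂ))*(x:ℝ)/2) * (u x : ℂ)
            + Complex.exp (2*(π:ℂ)*Complex.I*(-(i:ℂ))*(((2 - x : ℝ)):ℂ)/2) * (-(u x : ℂ)))
          = ∫ x in (0:ℝ)..1, -(2*Complex.I) * (((Real.sin ((i:ℝ)*π*x) * u x : ℝ)) : ℂ) :=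
        intervalIntegral.integral_congr (fun x _ => hcomb x)
      rw [hcongr, intervalIntegral.integral_const_mul, intervalIntegral.integral_ofReal]
      have hzero : ∫ x in (0:ℝ)..1, Real.sin ((i:ℝ)*π*x) * u x = 0 := by
        rw [intervalIntegral.integral_congr
          (g := fun x => u x * Real.sin ((i:ℝ)*π*x)) (fun x _ => mul_comm _ _)]
        exact hint i
      rw [hzero]
      simp
    rw [fourierCoeff_liftIco_eq, fourierCoeffOn_eq_integral]
    simp_rw [fourier_coe_apply]
    norm_num
    rw [← hmain]
    apply intervalIntegral.integral_congr
    intro x _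
    show Complex.exp (-(2*(π:ℂ)*Complex.I*(i:ℂ)*(x:ℝ))/2) * g x
      = Complex.exp (2*(π:ℂ)*Complex.I*(-(i:ℂ))*(x:ℝ)/2) * g x
    rw [show (-(2*(π:ℂ)*Complex.I*(i:ℂ)*(x:ℝ))/2) = 2*(π:ℂ)*Complex.I*(-(i:ℂ))*(x:ℝ)/2 from by ring]
  -- the L² argument: all Fourier coefficients vanish, hence the lift is zero
  set G := AddCircle.liftIco 2 0 g with hG
  have hGc : Continuous G := AddCircle.liftIco_zero_continuous hg02 hgc.continuousOn
  set Fc : C(AddCircle 2, ℂ) := ⟨G, hGc⟩ with hFc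
  haveI : Fact ((1:ENNReal) ≤ 2) := ⟨by norm_num⟩
  set μ : Measure (AddCircle 2) := AddCircle.haarAddCircle with hμ
  set fL : Lp ℂ 2 μ := ContinuousMap.toLp 2 μ ℂ Fc with hfL
  have hrep : ∀ j : ℤ, fourierBasis.repr fL j = 0 := by
    intro j
    rw [fourierBasis_repr]
    have hcoeff : fourierCoeff (⇑fL : AddCircle (2:ℝ) → ℂ) j = fourierCoeff (⇑Fc) j := by
      unfold fourierCoeff
      apply MeasureTheory.integral_congr_ae
      filter_upwards [ContinuousMap.coeFn_toLp (E := ℂ) (p := 2) μ (𝕜 := ℂ) Fc] with t ht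
      rw [ht]
    rw [hcoeff]
    exact key j
  have h0' : fourierBasis.repr fL = 0 := by
    ext j
    simpa using hrep j
  have hfL0 : fL = 0 := by
    have := congrArg (fourierBasis (T := 2)).repr.symm h0'
    rwa [LinearIsometryEquiv.symm_apply_apply, map_zero] at this
  have hae0 : (⇑Fc : AddCircle (2:ℝ) → ℂ) =ᵐ[μ] (fun _ => 0) := by
    have h1' := (ContinuousMap.coeFn_toLp (E := ℂ) (p := 2) μ (𝕜 := ℂ) Fc).symm
    have h2' : (⇑fL : AddCircle (2:ℝ) → ℂ) =ᵐ[μ] (fun _ => 0) := by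
      rw [hfL0]
      exact Lp.coeFn_zero _ _ _
    exact h1'.trans h2'
  have hF0 : (⇑Fc : AddCircle (2:ℝ) → ℂ) = fun _ => 0 :=
    (Continuous.ae_eq_iff_eq μ hGc continuous_const).mp hae0
  intro x hx
  have hx2 : x ∈ Ico (0:ℝ) 2 := ⟨hx.1, lt_of_le_of_lt hx.2 one_lt_two⟩
  have hlift := AddCircle.liftIco_zero_coe_apply (f := g) hx2
  have hgx : g x = 0 := by
    rw [← hlift]
    exact congrFun hF0 _
  have : (u x : ℂ) = 0 := by
    rw [hg] at hgx
    simpa [hx.2] using hgx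
  exact_mod_cast this

end OnlyStraightAux

theorem only_straight_solution (k β : ℝ) (hk : 0 < k) (hβ : -betaC k ≤ β)
    (u : ℝ → ℝ) (hu : IsStationarySolution β k u) :
    ∀ x ∈ Set.Icc (0 : ℝ) 1, u x = 0 := by
  open MeasureTheory intervalIntegral Set OnlyStraightAux in
  obtain ⟨hsm, hODE, hu0, hu1, hw0, hw1⟩ := hu
  set a : ℝ := ∫ y in (0:ℝ)..1, (deriv u y)^2 with ha
  have hderiv_cont : Continuous (deriv u) := hsm.continuous_deriv (by norm_num)
  have hdiff : Differentiable ℝ u := hsm.differentiable (by norm_num)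
  by_cases hcase : ∀ y ∈ Set.Ioo (0:ℝ) 1, deriv u y = 0
  · intro x hx
    rcases eq_or_lt_of_le hx.1 with h0x | h0x
    · rw [← h0x]; exact hu0
    · obtain ⟨c, hc, hslope⟩ := exists_deriv_eq_slope u h0x
        hsm.continuous.continuousOn hdiff.differentiableOn
      have hc0 : deriv u c = 0 := hcase c ⟨hc.1, lt_of_lt_of_le hc.2 hx.2⟩
      rw [hc0, hu0] at hslope
      have hx0 : x - 0 ≠ 0 := by simp [ne_of_gt h0x]
      have := hslope.symm
      rw [div_eq_iff hx0] at this
      simpa using this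
  · push_neg at hcase
    obtain ⟨y, hy, hyne⟩ := hcase
    have hapos : 0 < a := by
      rw [ha, intervalIntegral.integral_of_le (by norm_num : (0:ℝ) ≤ 1)]
      rw [MeasureTheory.setIntegral_pos_iff_support_of_nonneg_ae
        (Filter.Eventually.of_forall (fun z => sq_nonneg _))
        ((hderiv_cont.pow 2).integrableOn_Ioc)]
      have hsub : Set.Ioo (0:ℝ) 1 ∩ {z | deriv u z ≠ 0}
          ⊆ Function.support (fun z => (deriv u z)^2) ∩ Set.Ioc 0 1 := by
        rintro z ⟨hz1, hz2⟩
        exact ⟨pow_ne_zero 2 hz2, hz1.1, hz1.2.le⟩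
      have hopen : IsOpen (Set.Ioo (0:ℝ) 1 ∩ {z | deriv u z ≠ 0}) :=
        isOpen_Ioo.inter (isOpen_compl_singleton.preimage hderiv_cont)
      calc (0:ENNReal) < volume (Set.Ioo (0:ℝ) 1 ∩ {z | deriv u z ≠ 0}) :=
            hopen.measure_pos volume ⟨y, hy, hyne⟩
        _ ≤ _ := measure_mono hsub
    have hbetaC : ∀ n : ℕ, 1 ≤ n → betaC k ≤ mu n k := by
      intro n hn
      apply csInf_le
      · refine ⟨0, ?_⟩
        rintro x ⟨m, hm, rfl⟩
        have hm' : (0:ℝ) < (m:ℝ) := by exact_mod_cast hm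
        have hpi := Real.pi_pos
        unfold mu
        positivity
      · exact ⟨n, hn, rfl⟩
    set γ : ℝ := β + a with hγ
    have hcoef : ∀ n : ℕ, ∫ x in (0:ℝ)..1, u x * Real.sin ((n:ℝ)*π*x) = 0 := by
      intro n
      rcases Nat.eq_zero_or_pos n with rfl | hn
      · simp
      · have hcont_i2 : Continuous (iteratedDeriv 2 u) :=
          hsm.continuous_iteratedDeriv 2 (by norm_num)
        have hcont_i4 : Continuous (iteratedDeriv 4 u) :=
          hsm.continuous_iteratedDeriv 4 (by norm_num)
        have hcont_s : Continuous (fun x => Real.sin ((n:ℝ)*π*x)) := by continuity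
        have hzero : ∫ x in (0:ℝ)..1,
            (iteratedDeriv 4 u x - γ * iteratedDeriv 2 u x + k * u x)
              * Real.sin ((n:ℝ)*π*x) = 0 := by
          have heq : Set.EqOn
              (fun x => (iteratedDeriv 4 u x - γ * iteratedDeriv 2 u x + k * u x)
                * Real.sin ((n:ℝ)*π*x)) (fun _ => 0) (Set.uIcc 0 1) := by
            intro x hx
            rw [Set.uIcc_of_le (by norm_num : (0:ℝ) ≤ 1)] at hx
            have hode := hODE x hx
            show (iteratedDeriv 4 u x - γ * iteratedDeriv 2 u x + k * u x)
              * Real.sin ((n:ℝ)*π*x) = 0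
            rw [hode, zero_mul]
          rw [intervalIntegral.integral_congr heq]
          simp
        set c : ℝ := ∫ x in (0:ℝ)..1, u x * Real.sin ((n:ℝ)*π*x) with hcdef
        have e4 : iteratedDeriv 4 u = deriv (deriv (iteratedDeriv 2 u)) := by
          rw [show (4:ℕ) = 2+1+1 from rfl, iteratedDeriv_succ, iteratedDeriv_succ]
        have e2 : iteratedDeriv 2 u = deriv (deriv u) := by
          rw [show (2:ℕ) = 1+1 from rfl, iteratedDeriv_succ, iteratedDeriv_one]
        have hcd2iter : ContDiff ℝ 2 (iteratedDeriv 2 u) := by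
          rw [iteratedDeriv_eq_iterate]
          have h4 : ContDiff ℝ ((2 + 2 : ℕ) : WithTop ℕ∞) u := by exact_mod_cast hsm
          exact_mod_cast ContDiff.iterate_deriv' 2 2 h4
        have hI2 : ∫ x in (0:ℝ)..1, iteratedDeriv 2 u x * Real.sin ((n:ℝ)*π*x)
            = -((((n:ℝ)*π)^2)) * c := by
          rw [e2, hcdef]
          exact parts u (hsm.of_le (by norm_num)) hu0 hu1 n
        have hI4 : ∫ x in (0:ℝ)..1, iteratedDeriv 4 u x * Real.sin ((n:ℝ)*π*x)
            = (((n:ℝ)*π)^2)^2 * c := by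
          rw [e4, parts (iteratedDeriv 2 u) hcd2iter hw0 hw1 n, hI2]
          ring
        have h1int : IntervalIntegrable
            (fun x => iteratedDeriv 4 u x * Real.sin ((n:ℝ)*π*x)) volume 0 1 :=
          (hcont_i4.mul hcont_s).intervalIntegrable _ _
        have h2int : IntervalIntegrable
            (fun x => γ * (iteratedDeriv 2 u x * Real.sin ((n:ℝ)*π*x))) volume 0 1 :=
          (continuous_const.mul (hcont_i2.mul hcont_s)).intervalIntegrable _ _
        have h3int : IntervalIntegrable
            (fun x => k * (u x * Real.sin ((n:ℝ)*π*x))) volume 0 1 :=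
          (continuous_const.mul (hsm.continuous.mul hcont_s)).intervalIntegrable _ _
        have hsplit : (∫ x in (0:ℝ)..1, iteratedDeriv 4 u x * Real.sin ((n:ℝ)*π*x))
            - γ * (∫ x in (0:ℝ)..1, iteratedDeriv 2 u x * Real.sin ((n:ℝ)*π*x))
            + k * c = 0 := by
          have hre : ∫ x in (0:ℝ)..1,
              (iteratedDeriv 4 u x * Real.sin ((n:ℝ)*π*x)
                - γ * (iteratedDeriv 2 u x * Real.sin ((n:ℝ)*π*x))
                + k * (u x * Real.sin ((n:ℝ)*π*x))) = 0 := by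
            conv_rhs => rw [← hzero]
            apply intervalIntegral.integral_congr
            intro x _
            show iteratedDeriv 4 u x * Real.sin ((n:ℝ)*π*x)
                - γ * (iteratedDeriv 2 u x * Real.sin ((n:ℝ)*π*x))
                + k * (u x * Real.sin ((n:ℝ)*π*x))
              = (iteratedDeriv 4 u x - γ * iteratedDeriv 2 u x + k * u x)
                * Real.sin ((n:ℝ)*π*x)
            ring
          rw [intervalIntegral.integral_add (h1int.sub h2int) h3int,
            intervalIntegral.integral_sub h1int h2int,
            intervalIntegral.integral_const_mul, intervalIntegral.integral_const_mul] at hre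
          rw [← hcdef] at hre
          exact hre
        have hω : (0:ℝ) < ((n:ℝ)*π)^2 := by
          have h1 : (0:ℝ) < (n:ℝ) := by exact_mod_cast hn
          have hpi := Real.pi_pos
          positivity
        have hfac : ((((n:ℝ)*π)^2)^2 + γ * (((n:ℝ)*π)^2) + k) * c = 0 := by
          rw [hI4, hI2] at hsplit
          ring_nf
          ring_nf at hsplit
          linarith
        have hμω : mu n k * (((n:ℝ)*π)^2) = k + ((((n:ℝ)*π)^2))^2 := by
          unfold mu
          have hne : ((n:ℝ)^2 * π^2) ≠ 0 := by
            have h1 : (0:ℝ) < (n:ℝ) := by exact_mod_cast hn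
            have hpi := Real.pi_ne_zero
            positivity
          field_simp
        have hγgt : -mu n k < γ := by
          have h1 := hbetaC n hn
          rw [hγ]
          nlinarith [hapos, hβ]
        have hpos : 0 < (((n:ℝ)*π)^2)^2 + γ * (((n:ℝ)*π)^2) + k := by
          nlinarith [hω, hγgt, hμω]
        have := mul_eq_zero.mp hfac
        rcases this with h' | h'
        · exact absurd h' (ne_of_gt hpos)
        · rw [hcdef] at h'
          exact h'
    intro x hx
    exact OnlyStraightAux.sine_complete u hsm.continuous hu0 hu1 hcoef x hx
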